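/- Let n ≥ 3 and let C_n denote the cycle graph on n vertices. Then the set of complex roots of the independence polynomial I(C_n, z) is exactly { 1/(4·cos²((2k+1)π/(2n))) : k a nonnegative integer with 2k+1 < n }. In particular the smallest root is β(C_n) = 1/(4·cos²(π/(2n))) and the root of second smallest absolute value is 1/(4·cos²(3π/(2n))) (for n ≥ 4). -/

import Mathlib

open Polynomial

open scoped Classical in
/-- `indPolyOn G A` is the independence polynomial (over `ℝ`) of the subgraph of `G`
induced on the vertex set `A`: the sum of `(-1)^|s| • X^|s|` over all independent
sets `s ⊆ A` of `G`.  Equivalently it is `∑ k (-1)^k a_k z^k` where `a_k` is the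
number of independent sets of size `k` of the induced subgraph `G[A]`. -/
noncomputable def indPolyOn {V : Type*} [Fintype V] (G : SimpleGraph V) (A : Set V) :
    Polynomial ℝ :=
  ∑ s ∈ Finset.univ.filter
      (fun s : Finset V => ↑s ⊆ A ∧ ∀ u ∈ s, ∀ v ∈ s, ¬ G.Adj u v),
    ((-1 : ℝ) ^ s.card) • (X : Polynomial ℝ) ^ s.card

/-- The independence polynomial `I(G,z)` of `G`. -/
noncomputable def indPoly {V : Type*} [Fintype V] (G : SimpleGraph V) : Polynomial ℝ :=
  indPolyOn G Set.univ

open scoped Classical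

lemma indPolyOn_empty {V : Type*} [Fintype V] (G : SimpleGraph V) :
    indPolyOn G (∅ : Set V) = 1 := by
  rw [indPolyOn]
  have h : (Finset.univ.filter
      (fun s : Finset V => ↑s ⊆ (∅ : Set V) ∧ ∀ u ∈ s, ∀ v ∈ s, ¬ G.Adj u v)) = {∅} := by
    ext s
    simp only [Finset.mem_filter, Finset.mem_univ, true_and, Finset.mem_singleton]
    constructor
    · rintro ⟨hsub, -⟩
      rw [← Finset.coe_empty] at hsub
      exact_mod_cast Set.Subset.antisymm hsub (by simp)
    · rintro rfl
      simp
  rw [h]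
  simp

lemma indPolyOn_rec {V : Type*} [Fintype V] (G : SimpleGraph V) (A : Set V) (v : V)
    (hv : v ∈ A) :
    indPolyOn G A =
      indPolyOn G (A \ {v}) - X * indPolyOn G (A \ insert v {u | G.Adj v u}) := by
  rw [indPolyOn, indPolyOn, indPolyOn]
  rw [← Finset.sum_filter_add_sum_filter_not
    (Finset.univ.filter (fun s : Finset V => ↑s ⊆ A ∧ ∀ u ∈ s, ∀ w ∈ s, ¬ G.Adj u w))
    (fun s => v ∈ s)]
  have h2 : ∑ s ∈ (Finset.univ.filter
        (fun s : Finset V => ↑s ⊆ A ∧ ∀ u ∈ s, ∀ w ∈ s, ¬ G.Adj u w)).filter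
        (fun s => ¬ v ∈ s),
        ((-1 : ℝ) ^ s.card) • (X : Polynomial ℝ) ^ s.card
      = ∑ s ∈ Finset.univ.filter
        (fun s : Finset V => ↑s ⊆ A \ {v} ∧ ∀ u ∈ s, ∀ w ∈ s, ¬ G.Adj u w),
        ((-1 : ℝ) ^ s.card) • (X : Polynomial ℝ) ^ s.card := by
    apply Finset.sum_congr _ (fun _ _ => rfl)
    ext s
    simp only [Finset.mem_filter, Finset.mem_univ, true_and]
    constructor
    · rintro ⟨⟨hsub, hind⟩, hvs⟩
      refine ⟨fun u hu => ⟨hsub hu, ?_⟩, hind⟩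
      simp only [Set.mem_singleton_iff]
      rintro rfl
      exact hvs hu
    · rintro ⟨hsub, hind⟩
      exact ⟨⟨fun u hu => (hsub hu).1, hind⟩, fun hvs => (hsub hvs).2 rfl⟩
  have h1 : ∑ s ∈ (Finset.univ.filter
        (fun s : Finset V => ↑s ⊆ A ∧ ∀ u ∈ s, ∀ w ∈ s, ¬ G.Adj u w)).filter
        (fun s => v ∈ s),
        ((-1 : ℝ) ^ s.card) • (X : Polynomial ℝ) ^ s.card
      = ∑ t ∈ Finset.univ.filter
        (fun t : Finset V => ↑t ⊆ A \ insert v {u | G.Adj v u} ∧ ∀ u ∈ t, ∀ w ∈ t, ¬ G.Adj u w),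
        (-X) * (((-1 : ℝ) ^ t.card) • (X : Polynomial ℝ) ^ t.card) := by
    refine Finset.sum_bij' (fun s _ => s.erase v) (fun t _ => insert v t) ?_ ?_ ?_ ?_ ?_
    · intro s hs
      simp only [Finset.mem_filter, Finset.mem_univ, true_and] at hs ⊢
      obtain ⟨⟨hsub, hind⟩, hvs⟩ := hs
      constructor
      · intro u hu
        rw [Finset.coe_erase] at hu
        obtain ⟨hus, hune⟩ := hu
        refine ⟨hsub (Finset.mem_coe.mpr hus), ?_⟩
        simp only [Set.mem_insert_iff, Set.mem_setOf_eq]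
        push_neg
        exact ⟨hune, hind v hvs u hus⟩
      · intro u hu w hw
        exact hind u (Finset.erase_subset _ _ hu) w (Finset.erase_subset _ _ hw)
    · intro t ht
      simp only [Finset.mem_filter, Finset.mem_univ, true_and] at ht ⊢
      obtain ⟨hsub, hind⟩ := ht
      have hvt : v ∉ t := by
        intro hvt
        have := (hsub (Finset.mem_coe.mpr hvt)).2
        simp at this
      refine ⟨⟨?_, ?_⟩, Finset.mem_insert_self v t⟩
      · intro u hu
        rw [Finset.coe_insert] at hu
        rcases hu with rfl | hu
        · exact hv
        · exact (hsub (Finset.mem_coe.mpr hu)).1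
      · intro u hu w hw
        have hnadj : ∀ x ∈ t, ¬ G.Adj v x := by
          intro x hx
          have := (hsub (Finset.mem_coe.mpr hx)).2
          simp only [Set.mem_insert_iff, Set.mem_setOf_eq] at this
          push_neg at this
          exact this.2
        rcases Finset.mem_insert.mp hu with hu' | hu' <;>
          rcases Finset.mem_insert.mp hw with hw' | hw'
        · subst hu'; subst hw'; exact G.irrefl
        · subst hu'; exact hnadj w hw'
        · subst hw'; exact fun h => hnadj u hu' h.symm
        · exact hind u hu' w hw'
    · intro s hs
      simp only [Finset.mem_filter] at hs
      exact Finset.insert_erase hs.2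
    · intro t ht
      simp only [Finset.mem_filter, Finset.mem_univ, true_and] at ht
      have hvt : v ∉ t := by
        intro hvt
        have := (ht.1 (Finset.mem_coe.mpr hvt)).2
        simp at this
      exact Finset.erase_insert hvt
    · intro s hs
      simp only [Finset.mem_filter] at hs
      have hc : s.card = (s.erase v).card + 1 := (Finset.card_erase_add_one hs.2).symm
      rw [hc]
      simp only [smul_eq_C_mul, map_pow, map_neg, map_one]
      ring
  rw [h1, h2]
  rw [← Finset.mul_sum]
  ring

noncomputable def pP : ℕ → Polynomial ℝ
  | 0 => 1
  | 1 => 1 - X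
  | (m+2) => pP (m+1) - X * pP m

lemma pP_succ (m : ℕ) : pP (m+1) = pP m - X * pP (m-1) := by
  rcases m with _ | k
  · show (1 : Polynomial ℝ) - X = 1 - X * 1
    ring
  · rfl

lemma pP_natDegree : ∀ m, (pP m).natDegree ≤ (m+1)/2 := by
  intro m
  induction m using Nat.twoStepInduction with
  | zero => simp [pP]
  | one =>
    refine le_trans (natDegree_sub_le _ _) ?_
    simp
  | more m ih1 ih2 =>
    show (pP (m+1) - X * pP m).natDegree ≤ (m+3)/2
    refine le_trans (natDegree_sub_le _ _) ?_
    have h1 : (X * pP m).natDegree ≤ 1 + (m+1)/2 :=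
      le_trans (natDegree_mul_le) (by simp [ih1])
    have := ih2
    omega

lemma pP_eval_zero : ∀ m, (pP m).eval 0 = 1 := by
  intro m
  induction m using Nat.twoStepInduction with
  | zero => simp [pP]
  | one => simp [pP]
  | more m ih1 ih2 =>
    have h : pP (m+2) = pP (m+1) - X * pP m := rfl
    rw [h]
    simp [ih1, ih2]

lemma pP_eval (θ z : ℝ) (hz : 4 * Real.cos θ ^ 2 * z = 1) :
    ∀ m : ℕ, Real.sin θ * (2 * Real.cos θ)^(m+1) * (pP m).eval z
      = Real.sin (((m : ℝ) + 2) * θ) := by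
  intro m
  induction m using Nat.twoStepInduction with
  | zero =>
    norm_num [pP]
    rw [Real.sin_two_mul]
    ring
  | one =>
    norm_num [pP]
    rw [Real.sin_three_mul]
    linear_combination (-Real.sin θ) * hz + 4 * Real.sin θ * Real.sin_sq_add_cos_sq θ
  | more m ih1 ih2 =>
    have key : Real.sin (((m:ℝ)+4)*θ)
        = 2*Real.cos θ * Real.sin (((m:ℝ)+3)*θ) - Real.sin (((m:ℝ)+2)*θ) := by
      rw [show ((m:ℝ)+4)*θ = ((m:ℝ)+3)*θ + θ by ring,
          show ((m:ℝ)+2)*θ = ((m:ℝ)+3)*θ - θ by ring, Real.sin_add, Real.sin_sub]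
      ring
    push_cast at ih1 ih2 ⊢
    rw [show ((m:ℝ)+1+2) = (m:ℝ)+3 by ring] at ih2
    show Real.sin θ * (2 * Real.cos θ)^(m+2+1) * (pP (m+1) - X * pP m).eval z = _
    rw [eval_sub, eval_mul, eval_X]
    push_cast
    rw [show ((m:ℝ)+2+2) = (m:ℝ)+4 by ring]
    linear_combination (2*Real.cos θ) * ih2 - key - ih1
      - (Real.sin θ * (2*Real.cos θ)^(m+1) * ((pP m).eval z)) * hz

lemma cyc_eval {n : ℕ} (hn : 3 ≤ n) (θ z : ℝ) (hz : 4 * Real.cos θ ^ 2 * z = 1) :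
    Real.sin θ * (2 * Real.cos θ)^n * (pP (n-1) - X * pP (n-3)).eval z
      = 2 * Real.cos (n * θ) * Real.sin θ := by
  obtain ⟨m, rfl⟩ : ∃ m, n = m + 3 := ⟨n - 3, by omega⟩
  have h2 := pP_eval θ z hz (m+2)
  have h0 := pP_eval θ z hz m
  have key : Real.cos (((m:ℝ)+3)*θ) * (2*Real.sin θ)
      = Real.sin (((m:ℝ)+4)*θ) - Real.sin (((m:ℝ)+2)*θ) := by
    rw [show ((m:ℝ)+4)*θ = ((m:ℝ)+3)*θ + θ by ring,
        show ((m:ℝ)+2)*θ = ((m:ℝ)+3)*θ - θ by ring, Real.sin_add, Real.sin_sub]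
    ring
  show Real.sin θ * (2 * Real.cos θ)^(m+3) * (pP (m+3-1) - X * pP (m+3-3)).eval z = _
  rw [show m+3-1 = m+2 from rfl, show m+3-3 = m from rfl, eval_sub, eval_mul, eval_X]
  push_cast at h2 ⊢
  rw [show ((m:ℝ)+2+2) = (m:ℝ)+4 by ring] at h2
  linear_combination h2 - (Real.sin θ * (2*Real.cos θ)^(m+1) * ((pP m).eval z)) * hz
    - h0 - key

lemma cg_adj {n : ℕ} (hn : 3 ≤ n) (u w : Fin n) :
    (SimpleGraph.cycleGraph n).Adj u w ↔
      (w.val = u.val + 1 ∨ u.val = w.val + 1 ∨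
        (u.val = n - 1 ∧ w.val = 0) ∨ (w.val = n - 1 ∧ u.val = 0)) := by
  have sub_val : ∀ a b : Fin n, ((a - b : Fin n)).val = 1 ↔
      (a.val = b.val + 1 ∨ (b.val = n - 1 ∧ a.val = 0)) := by
    intro a b
    have ha := a.is_lt
    have hb := b.is_lt
    rw [Fin.sub_def]
    simp only
    rcases lt_or_ge (n - b.val + a.val) n with h | h
    · rw [Nat.mod_eq_of_lt h]; omega
    · rw [Nat.mod_eq_sub_mod h, Nat.mod_eq_of_lt (by omega)]; omega
  rw [SimpleGraph.cycleGraph_adj', sub_val u w, sub_val w u]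
  tauto

def seg (n a b : ℕ) : Set (Fin n) := {v : Fin n | a ≤ v.val ∧ v.val < b}

lemma seg_eq {n : ℕ} (hn : 3 ≤ n) :
    ∀ m a b, b - a = m → b ≤ n → (0 < a ∨ b < n) →
      indPolyOn (SimpleGraph.cycleGraph n) (seg n a b) = pP m := by
  intro m
  induction m using Nat.strong_induction_on with
  | _ m ih =>
    intro a b hab hbn hcond
    rcases m with _ | m'
    · have h : seg n a b = ∅ := by
        ext u
        simp only [seg, Set.mem_setOf_eq, Set.mem_empty_iff_false, iff_false, not_and, not_lt]
        omega
      rw [h, indPolyOn_empty]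
      rfl
    · have hb1 : 0 < b := by omega
      have hblt : b - 1 < n := by omega
      have hvmem : (⟨b-1, hblt⟩ : Fin n) ∈ seg n a b := by
        simp only [seg, Set.mem_setOf_eq]
        omega
      rw [indPolyOn_rec _ _ _ hvmem]
      have e1 : seg n a b \ {(⟨b-1, hblt⟩ : Fin n)} = seg n a (b-1) := by
        ext u
        have hu := u.is_lt
        simp only [seg, Set.mem_diff, Set.mem_setOf_eq, Set.mem_singleton_iff, Fin.ext_iff]
        omega
      have e2 : seg n a b \ insert (⟨b-1, hblt⟩ : Fin n)
          {u | (SimpleGraph.cycleGraph n).Adj (⟨b-1, hblt⟩ : Fin n) u} = seg n a (b-2) := by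
        ext u
        have hu := u.is_lt
        simp only [seg, Set.mem_diff, Set.mem_setOf_eq, Set.mem_insert_iff, Fin.ext_iff,
          cg_adj hn]
        omega
      rw [e1, e2, ih m' (by omega) a (b-1) (by omega) (by omega) (Or.inr (by omega)),
        ih (m'-1) (by omega) a (b-2) (by omega) (by omega) (Or.inr (by omega)),
        pP_succ]

lemma indPoly_cycle {n : ℕ} (hn : 3 ≤ n) :
    indPoly (SimpleGraph.cycleGraph n) = pP (n-1) - X * pP (n-3) := by
  rw [indPoly]
  have h0lt : 0 < n := by omega
  have hvmem : (⟨0, h0lt⟩ : Fin n) ∈ (Set.univ : Set (Fin n)) := trivial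
  rw [indPolyOn_rec _ _ _ hvmem]
  have e1 : (Set.univ : Set (Fin n)) \ {(⟨0, h0lt⟩ : Fin n)} = seg n 1 n := by
    ext u
    have hu := u.is_lt
    simp only [seg, Set.mem_diff, Set.mem_univ, true_and, Set.mem_singleton_iff,
      Set.mem_setOf_eq, Fin.ext_iff]
    omega
  have e2 : (Set.univ : Set (Fin n)) \ insert (⟨0, h0lt⟩ : Fin n)
      {u | (SimpleGraph.cycleGraph n).Adj (⟨0, h0lt⟩ : Fin n) u} = seg n 2 (n-1) := by
    ext u
    have hu := u.is_lt
    simp only [seg, Set.mem_diff, Set.mem_univ, true_and, Set.mem_insert_iff,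
      Set.mem_setOf_eq, Fin.ext_iff, cg_adj hn, and_true, true_and]
    omega
  rw [e1, e2, seg_eq hn (n-1) 1 n (by omega) le_rfl (Or.inl (by omega)),
    seg_eq hn (n-3) 2 (n-1) (by omega) (by omega) (Or.inr (by omega))]

noncomputable def th (n k : ℕ) : ℝ := (2 * (k:ℝ) + 1) * Real.pi / (2 * (n:ℝ))

noncomputable def rr (n k : ℕ) : ℝ := 1 / (4 * Real.cos (th n k) ^ 2)

lemma th_pos {n k : ℕ} (hn : 3 ≤ n) : 0 < th n k := by
  have hπ := Real.pi_pos
  have hn0 : (0:ℝ) < (n:ℝ) := by exact_mod_cast (by omega : 0 < n)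
  rw [th]
  positivity

lemma th_lt {n k : ℕ} (hn : 3 ≤ n) (hk : 2*k+1 < n) : th n k < Real.pi / 2 := by
  have hπ := Real.pi_pos
  have hn0 : (0:ℝ) < (n:ℝ) := by exact_mod_cast (by omega : 0 < n)
  have hkn : (2*(k:ℝ)+1) < (n:ℝ) := by exact_mod_cast hk
  rw [th, div_lt_div_iff₀ (by positivity) (by norm_num)]
  nlinarith

lemma cos_th_pos {n k : ℕ} (hn : 3 ≤ n) (hk : 2*k+1 < n) : 0 < Real.cos (th n k) :=
  Real.cos_pos_of_mem_Ioo ⟨by linarith [th_pos (k := k) hn, Real.pi_pos], th_lt hn hk⟩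

lemma sin_th_pos {n k : ℕ} (hn : 3 ≤ n) (hk : 2*k+1 < n) : 0 < Real.sin (th n k) :=
  Real.sin_pos_of_pos_of_lt_pi (th_pos hn) (by linarith [th_lt hn hk, Real.pi_pos])

lemma hz_th {n k : ℕ} (hn : 3 ≤ n) (hk : 2*k+1 < n) :
    4 * Real.cos (th n k) ^ 2 * rr n k = 1 := by
  have hc := cos_th_pos hn hk
  rw [rr]
  field_simp

lemma rr_pos {n k : ℕ} (hn : 3 ≤ n) (hk : 2*k+1 < n) : 0 < rr n k := by
  have hc := cos_th_pos hn hk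
  rw [rr]
  positivity

lemma rr_root {n k : ℕ} (hn : 3 ≤ n) (hk : 2*k+1 < n) :
    (pP (n-1) - X * pP (n-3)).eval (rr n k) = 0 := by
  have hc := cos_th_pos hn hk
  have hs := sin_th_pos hn hk
  have hn0 : (n:ℝ) ≠ 0 := by
    have : (0:ℝ) < (n:ℝ) := by exact_mod_cast (by omega : 0 < n)
    linarith
  have h := cyc_eval hn (th n k) (rr n k) (hz_th hn hk)
  have hcn : Real.cos ((n:ℝ) * th n k) = 0 := by
    rw [Real.cos_eq_zero_iff]
    refine ⟨(k:ℤ), ?_⟩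
    rw [th]
    push_cast
    field_simp
  rw [hcn, mul_zero, zero_mul] at h
  have hne : Real.sin (th n k) * (2 * Real.cos (th n k))^n ≠ 0 := by positivity
  exact (mul_eq_zero.mp h).resolve_left hne

lemma rr_lt {n : ℕ} (hn : 3 ≤ n) {j k : ℕ} (hjk : j < k) (hk : 2*k+1 < n) :
    rr n j < rr n k := by
  have hj : 2*j+1 < n := by omega
  have hθ : th n j < th n k := by
    have hπ := Real.pi_pos
    have hn0 : (0:ℝ) < (n:ℝ) := by exact_mod_cast (by omega : 0 < n)
    have hjk' : (j:ℝ) < (k:ℝ) := by exact_mod_cast hjk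
    rw [th, th]
    gcongr
  have hck := cos_th_pos hn hk
  have hcj := cos_th_pos hn hj
  have hcc : Real.cos (th n k) < Real.cos (th n j) :=
    Real.cos_lt_cos_of_nonneg_of_le_pi (le_of_lt (th_pos hn))
      (by linarith [th_lt hn hk, Real.pi_pos]) hθ
  rw [rr, rr]
  apply one_div_lt_one_div_of_lt (by positivity)
  nlinarith

/-- For `n ≥ 3`, the set of complex roots of the independence
polynomial of the cycle graph `C_n` is exactly
`{1/(4cos²((2k+1)π/(2n))) : k ∈ ℕ, 2k+1 < n}`.  In particular the smallest root is
`β(C_n) = 1/(4cos²(π/(2n)))`, and for `n ≥ 4` the root of second smallest absolute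
value is `1/(4cos²(3π/(2n)))`. -/
theorem indPoly_cycleGraph_roots (n : ℕ) (hn : 3 ≤ n) :
    ({z : ℂ | aeval z (indPoly (SimpleGraph.cycleGraph n)) = 0} =
      (fun k : ℕ =>
          ((1 / (4 * Real.cos ((2 * k + 1) * Real.pi / (2 * n)) ^ 2) : ℝ) : ℂ)) ''
        {k : ℕ | 2 * k + 1 < n}) ∧
    ((indPoly (SimpleGraph.cycleGraph n)).eval
        (1 / (4 * Real.cos (Real.pi / (2 * n)) ^ 2)) = 0 ∧
      ∀ x : ℝ, (indPoly (SimpleGraph.cycleGraph n)).eval x = 0 →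
        1 / (4 * Real.cos (Real.pi / (2 * n)) ^ 2) ≤ x) ∧
    (4 ≤ n →
      (indPoly (SimpleGraph.cycleGraph n)).eval
          (1 / (4 * Real.cos (3 * Real.pi / (2 * n)) ^ 2)) = 0 ∧
      ∀ z : ℂ, aeval z (indPoly (SimpleGraph.cycleGraph n)) = 0 →
        z ≠ ((1 / (4 * Real.cos (Real.pi / (2 * n)) ^ 2) : ℝ) : ℂ) →
        1 / (4 * Real.cos (3 * Real.pi / (2 * n)) ^ 2) ≤ ‖z‖) := by
  have hcp := indPoly_cycle hn
  set cp := pP (n-1) - X * pP (n-3) with hcpdef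
  have hth0 : Real.pi / (2 * (n:ℝ)) = th n 0 := by rw [th]; push_cast; ring
  have hth1 : 3 * Real.pi / (2 * (n:ℝ)) = th n 1 := by rw [th]; push_cast; ring
  have hfr : ∀ k : ℕ, ((1 / (4 * Real.cos ((2 * (k:ℝ) + 1) * Real.pi / (2 * (n:ℝ))) ^ 2) : ℝ) : ℂ)
      = ((rr n k : ℝ) : ℂ) := fun k => rfl
  have hiff : ∀ k : ℕ, k < n/2 ↔ 2*k+1 < n := by intro k; omega
  -- the polynomial over ℂ
  set q := cp.map (algebraMap ℝ ℂ) with hq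
  have hcpe : cp.eval 0 = 1 := by
    rw [hcpdef]
    simp [pP_eval_zero]
  have hcp0 : cp ≠ 0 := fun h => by rw [h] at hcpe; simp at hcpe
  have hq0 : q ≠ 0 := by
    intro h
    have hqe : q.eval 0 = 1 := by
      rw [hq, show (0:ℂ) = algebraMap ℝ ℂ 0 by simp, Polynomial.eval_map,
        Polynomial.eval₂_at_apply, hcpe]
      simp
    rw [h] at hqe
    simp at hqe
  have hdeg : cp.natDegree ≤ n/2 := by
    rw [hcpdef]
    refine le_trans (natDegree_sub_le _ _) ?_
    have h1 := pP_natDegree (n-1)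
    have h2 := pP_natDegree (n-3)
    have h3 : (X * pP (n-3)).natDegree ≤ 1 + (pP (n-3)).natDegree :=
      le_trans natDegree_mul_le (by simp)
    omega
  have hqdeg : q.natDegree ≤ n/2 := le_trans Polynomial.natDegree_map_le hdeg
  have hkey : ∀ x : ℂ, aeval x cp = q.eval x := by
    intro x
    rw [hq, Polynomial.eval_map, Polynomial.aeval_def]
  have hroot : ∀ k, 2*k+1 < n → q.eval ((rr n k : ℝ) : ℂ) = 0 := by
    intro k hk
    rw [hq, show ((rr n k : ℝ) : ℂ) = algebraMap ℝ ℂ (rr n k) from rfl,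
      Polynomial.eval_map, Polynomial.eval₂_at_apply, hcpdef, rr_root hn hk]
    simp
  set F := (Finset.range (n/2)).image (fun k => ((rr n k : ℝ) : ℂ)) with hF
  have hinj : Set.InjOn (fun k => ((rr n k : ℝ) : ℂ)) (Finset.range (n/2)) := by
    intro j hj k hk h
    simp only [Finset.coe_range, Set.mem_Iio] at hj hk
    simp only [Complex.ofReal_inj] at h
    have h' : rr n j = rr n k := h
    rcases lt_trichotomy j k with hlt | heq | hgt
    · exact absurd h' (ne_of_lt (rr_lt hn hlt ((hiff k).mp hk)))
    · exact heq
    · exact absurd h'.symm (ne_of_lt (rr_lt hn hgt ((hiff j).mp hj)))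
  have hFcard : F.card = n/2 := by
    rw [hF, Finset.card_image_of_injOn hinj, Finset.card_range]
  have hFsub : F ⊆ q.roots.toFinset := by
    intro z hz
    rw [hF, Finset.mem_image] at hz
    obtain ⟨k, hk, rfl⟩ := hz
    rw [Multiset.mem_toFinset, Polynomial.mem_roots hq0]
    exact hroot k ((hiff k).mp (Finset.mem_range.mp hk))
  have hcard2 : q.roots.toFinset.card ≤ F.card := by
    rw [hFcard]
    exact le_trans (Multiset.toFinset_card_le _) (le_trans (Polynomial.card_roots' q) hqdeg)
  have hFeq : F = q.roots.toFinset := Finset.eq_of_subset_of_card_le hFsub hcard2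
  have hset : {z : ℂ | aeval z (indPoly (SimpleGraph.cycleGraph n)) = 0}
      = (fun k : ℕ =>
          ((1 / (4 * Real.cos ((2 * k + 1) * Real.pi / (2 * n)) ^ 2) : ℝ) : ℂ)) ''
        {k : ℕ | 2 * k + 1 < n} := by
    ext z
    simp only [Set.mem_setOf_eq, Set.mem_image, hcp, hkey]
    constructor
    · intro h
      have hmem : z ∈ q.roots.toFinset := by
        rw [Multiset.mem_toFinset, Polynomial.mem_roots hq0]
        exact h
      rw [← hFeq, hF, Finset.mem_image] at hmem
      obtain ⟨k, hk, hzk⟩ := hmem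
      exact ⟨k, (hiff k).mp (Finset.mem_range.mp hk), by rw [hfr k]; exact hzk⟩
    · rintro ⟨k, hk, rfl⟩
      rw [hfr k]
      exact hroot k hk
  refine ⟨hset, ⟨?_, ?_⟩, fun hn4 => ⟨?_, ?_⟩⟩
  · rw [hcp, hth0]
    exact rr_root hn (by omega)
  · intro x hx
    rw [hcp] at hx
    have hxc : aeval ((x:ℝ):ℂ) (indPoly (SimpleGraph.cycleGraph n)) = 0 := by
      rw [hcp, Polynomial.aeval_def, show ((x:ℝ):ℂ) = algebraMap ℝ ℂ x from rfl,
        Polynomial.eval₂_at_apply, hx]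
      simp
    have hmem := (Set.ext_iff.mp hset ((x:ℝ):ℂ)).mp hxc
    obtain ⟨k, hk, hke⟩ := hmem
    have hke' : ((rr n k : ℝ) : ℂ) = ((x:ℝ):ℂ) := hke
    have hxe : x = rr n k := by exact_mod_cast hke'.symm
    rw [hth0, hxe]
    show rr n 0 ≤ rr n k
    rcases Nat.eq_zero_or_pos k with rfl | hkpos
    · exact le_refl _
    · exact le_of_lt (rr_lt hn hkpos hk)
  · rw [hcp, hth1]
    exact rr_root hn (by omega)
  · intro z hz hzne
    have hmem := (Set.ext_iff.mp hset z).mp hz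
    obtain ⟨k, hk, hke⟩ := hmem
    have hke' : ((rr n k : ℝ) : ℂ) = z := hke
    have hk0 : k ≠ 0 := by
      rintro rfl
      apply hzne
      rw [← hke', hth0]
      rfl
    have hk1 : 2*1+1 < n := by omega
    rw [hth1, ← hke', Complex.norm_real, Real.norm_eq_abs, abs_of_pos (rr_pos hn hk)]
    show rr n 1 ≤ rr n k
    rcases Nat.lt_or_ge 1 k with hlt | hge
    · exact le_of_lt (rr_lt hn hlt hk)
    · have : k = 1 := by omega
      rw [this]
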